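/- Let G be a graph on n vertices with minimum degree at least 2, and let Γ₀ ⊆ G be a spanning subgraph of minimum degree at least 2 such that: (i) the set SMALL of vertices of Γ₀-degree < d₀ has size at most n^{0.3}; (ii) no two (possibly equal) vertices of SMALL are joined in G by a nonempty path of length at most 4; (iii) every U with |U| ≤ n/√(ln n) spans at most |U|·(ln n)^{3/4} edges of Γ₀; (iv) for all disjoint U, W with |U| ≤ n/√(ln n) and |W| ≤ |U|·(ln n)^{1/4}, the number of Γ₀-edges between U and W is at most d₀|U|/2; (v) every vertex outside SMALL has Γ₀-degree at least d₀; (vi) for every pair of disjoint sets U, W of size ⌈n/√(ln n)⌉, Γ₀ has at least one edge between U and W. Then Γ₀ is an (n/4, 2)-expander, i.e., |N_{Γ₀}(S)| ≥ 2|S| for every S with |S| ≤ n/4. (Here d₀ = ⌊δ₀ ln n⌋ for a small constant δ₀ > 0, and n is sufficiently large.) -/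

import Mathlib

open scoped Classical

/-- External neighborhood of a vertex set `S` in a graph `G`. -/
noncomputable def extNbhd {V : Type*} [Fintype V] [DecidableEq V]
    (G : SimpleGraph V) (S : Finset V) : Finset V :=
  Finset.univ.filter (fun v => v ∉ S ∧ ∃ u ∈ S, G.Adj u v)

/-- Number of edges of `G` spanned by the vertex set `U`. -/
noncomputable def edgesWithin {V : Type*} [Fintype V] [DecidableEq V]
    (G : SimpleGraph V) (U : Finset V) : ℕ :=
  (G.edgeFinset.filter (fun e => ∀ x ∈ e, x ∈ U)).card

/-- Number of edges of `G` with one endpoint in `U` and the other in `W`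
(for disjoint `U`, `W`). -/
noncomputable def edgesBetween {V : Type*} [Fintype V] [DecidableEq V]
    (G : SimpleGraph V) (U W : Finset V) : ℕ :=
  ((U ×ˢ W).filter (fun p => G.Adj p.1 p.2)).card

section Aux
open Finset
variable {V : Type*} [Fintype V] [DecidableEq V]

lemma edgesBetween_eq_sum (G : SimpleGraph V) (U A : Finset V) :
    edgesBetween G U A = ∑ x ∈ U, (A ∩ G.neighborFinset x).card := by
  classical
  unfold edgesBetween
  have hrw : (U ×ˢ A).filter (fun p => G.Adj p.1 p.2)
      = U.biUnion (fun x => (A ∩ G.neighborFinset x).image (fun y => (x, y))) := by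
    ext p
    simp only [mem_filter, mem_product, mem_biUnion, mem_image, mem_inter,
      SimpleGraph.mem_neighborFinset]
    constructor
    · rintro ⟨⟨h1, h2⟩, h3⟩
      exact ⟨p.1, h1, p.2, ⟨h2, h3⟩, rfl⟩
    · rintro ⟨x, hx, y, ⟨hy, hadj⟩, rfl⟩
      exact ⟨⟨hx, hy⟩, hadj⟩
  rw [hrw, card_biUnion]
  · refine sum_congr rfl fun x _ => ?_
    exact card_image_of_injective _ (fun a b h => by injection h)
  · intro x hx y hy hxy
    simp only [disjoint_left, mem_image]
    rintro p ⟨a, _, rfl⟩ ⟨b, _, hb⟩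
    exact absurd (by injection hb with h1 h2; exact h1.symm) hxy

lemma edgesBetween_self_le (G : SimpleGraph V) (U : Finset V) :
    edgesBetween G U U ≤ 2 * edgesWithin G U := by
  classical
  unfold edgesBetween edgesWithin
  set P := (U ×ˢ U).filter (fun p => G.Adj p.1 p.2) with hP
  have hcard : P.card ≤ 2 * (P.image (fun p => Sym2.mk p.1 p.2)).card := by
    apply Finset.card_le_mul_card_image
    intro e he
    obtain ⟨⟨x, y⟩, hxy, rfl⟩ := mem_image.1 he
    have hsub : (P.filter fun p => Sym2.mk p.1 p.2 = Sym2.mk x y) ⊆ {(x, y), (y, x)} := by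
      intro ⟨a, b⟩ hab
      have := (mem_filter.1 hab).2
      rw [Sym2.mk_eq_mk_iff (p := (a, b)) (q := (x, y))] at this
      simp only [Prod.mk.injEq, Prod.swap_prod_mk] at this
      simp only [mem_insert, mem_singleton, Prod.mk.injEq]
      tauto
    calc (P.filter fun p => Sym2.mk p.1 p.2 = Sym2.mk x y).card
        ≤ ({(x, y), (y, x)} : Finset (V × V)).card := card_le_card hsub
      _ ≤ 2 := (card_insert_le _ _).trans (by simp)
  refine hcard.trans (Nat.mul_le_mul_left 2 (card_le_card ?_))
  intro e he
  obtain ⟨⟨x, y⟩, hxy, rfl⟩ := mem_image.1 he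
  have hx := mem_filter.1 hxy
  have hmem := mem_product.1 hx.1
  simp only [mem_filter, SimpleGraph.mem_edgeFinset]
  refine ⟨hx.2, ?_⟩
  intro z hz
  rw [Sym2.mem_iff] at hz
  rcases hz with rfl | rfl
  · exact hmem.1
  · exact hmem.2

end Aux
theorem stmt_18 :
    ∃ δ₀ : ℝ, 0 < δ₀ ∧ ∃ n₀ : ℕ, ∀ n : ℕ, n₀ ≤ n →
    ∀ G Γ₀ : SimpleGraph (Fin n), Γ₀ ≤ G →
    (∀ v, 2 ≤ G.degree v) → (∀ v, 2 ≤ Γ₀.degree v) →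
    -- d₀ and SMALL
    ∀ d₀ : ℕ, d₀ = ⌊δ₀ * Real.log n⌋₊ →
    ∀ SMALL : Finset (Fin n), SMALL = Finset.univ.filter (fun v => Γ₀.degree v < d₀) →
    -- (i) SMALL is small
    ((SMALL.card : ℝ) ≤ (n : ℝ) ^ (0.3 : ℝ)) →
    -- (ii) no nonempty path (or cycle, for coinciding endpoints) of length at most 4
    -- in G between two vertices of SMALL
    (∀ u v : Fin n, u ∈ SMALL → v ∈ SMALL → ∀ w : G.Walk u v,
      w.IsPath → 1 ≤ w.length → ¬ w.length ≤ 4) →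
    (∀ u : Fin n, u ∈ SMALL → ∀ c : G.Walk u u, c.IsCycle → ¬ c.length ≤ 4) →
    -- (iii) small sets span few Γ₀-edges
    (∀ U : Finset (Fin n), (U.card : ℝ) ≤ (n : ℝ) / Real.sqrt (Real.log n) →
      ((edgesWithin Γ₀ U : ℝ) ≤ (U.card : ℝ) * (Real.log n) ^ ((3 : ℝ) / 4))) →
    -- (iv) few Γ₀-edges between a small set and a not-much-larger set
    (∀ U W : Finset (Fin n), Disjoint U W →
      (U.card : ℝ) ≤ (n : ℝ) / Real.sqrt (Real.log n) →
      (W.card : ℝ) ≤ (U.card : ℝ) * (Real.log n) ^ ((1 : ℝ) / 4) →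
      2 * (edgesBetween Γ₀ U W : ℝ) ≤ (d₀ : ℝ) * U.card) →
    -- (v) vertices outside SMALL have Γ₀-degree at least d₀
    (∀ v : Fin n, v ∉ SMALL → d₀ ≤ Γ₀.degree v) →
    -- (vi) Γ₀ has an edge between any two disjoint sets of size ⌈n/√(ln n)⌉
    (∀ U W : Finset (Fin n), Disjoint U W →
      U.card = ⌈(n : ℝ) / Real.sqrt (Real.log n)⌉₊ →
      W.card = ⌈(n : ℝ) / Real.sqrt (Real.log n)⌉₊ →
      ∃ u ∈ U, ∃ w ∈ W, Γ₀.Adj u w) →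
    -- conclusion: Γ₀ is an (n/4, 2)-expander
    ∀ S : Finset (Fin n), 4 * S.card ≤ n → 2 * S.card ≤ (extNbhd Γ₀ S).card := by
  classical
  refine ⟨1, one_pos, ⌈Real.exp 10000⌉₊, ?_⟩
  intro n hn G Γ₀ hle hdegG hdeg2 d₀ hd₀ SMALL hSMALL hsmallcard hpath hcyc hP3 hP4 hP5 hP6 S hS4
  -- numeric preliminaries
  have hnpos : (0:ℝ) < n := by
    have h1 : (1:ℝ) ≤ Real.exp 10000 := by
      have := Real.one_le_exp (by norm_num : (0:ℝ) ≤ 10000); linarith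
    have : 1 ≤ ⌈Real.exp 10000⌉₊ := by
      exact Nat.one_le_ceil_iff.2 (by linarith)
    have : 1 ≤ n := le_trans this hn
    exact_mod_cast Nat.lt_of_lt_of_le Nat.zero_lt_one this
  set L : ℝ := Real.log n with hLdef
  have hL4 : (10000:ℝ) ≤ L := by
    rw [hLdef, Real.le_log_iff_exp_le hnpos]
    calc Real.exp 10000 ≤ (⌈Real.exp 10000⌉₊ : ℝ) := Nat.le_ceil _
      _ ≤ n := by exact_mod_cast hn
  have hLpos : (0:ℝ) < L := by linarith
  have hL14 : (10:ℝ) ≤ L ^ ((1:ℝ)/4) := by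
    have h1 : (10000:ℝ) ^ ((1:ℝ)/4) = 10 := by
      rw [show (10000:ℝ) = 10 ^ (4:ℕ) by norm_num, ← Real.rpow_natCast 10 4,
        ← Real.rpow_mul (by norm_num)]
      norm_num
    calc (10:ℝ) = (10000:ℝ) ^ ((1:ℝ)/4) := h1.symm
      _ ≤ L ^ ((1:ℝ)/4) := Real.rpow_le_rpow (by norm_num) hL4 (by norm_num)
  have hL34 : 10 * L ^ ((3:ℝ)/4) ≤ L := by
    calc 10 * L ^ ((3:ℝ)/4) ≤ L ^ ((1:ℝ)/4) * L ^ ((3:ℝ)/4) := by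
          have : (0:ℝ) ≤ L ^ ((3:ℝ)/4) := Real.rpow_nonneg hLpos.le _
          nlinarith
      _ = L := by rw [← Real.rpow_add hLpos]; norm_num
  have hd₀L : L - 1 < (d₀:ℝ) := by
    rw [hd₀, one_mul]
    have := Nat.sub_one_lt_floor L
    simpa using this
  have hd₀big : 4 * L ^ ((3:ℝ)/4) + 2 < (d₀:ℝ) := by nlinarith
  -- contradiction setup
  by_contra hcon
  push_neg at hcon
  set N : Finset (Fin n) := extNbhd Γ₀ S with hNdef
  set m : ℕ := ⌈(n : ℝ) / Real.sqrt (Real.log n)⌉₊ with hmdef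
  by_cases hbig : m ≤ S.card
  · -- Case 1 : S is big
    have hT : m ≤ (Finset.univ \ (S ∪ N)).card := by
      have h1 : (Finset.univ \ (S ∪ N)).card = n - (S ∪ N).card := by
        rw [Finset.card_sdiff_of_subset (Finset.subset_univ _), Finset.card_univ, Fintype.card_fin]
      have h2 : (S ∪ N).card ≤ S.card + N.card := Finset.card_union_le _ _
      omega
    obtain ⟨U, hUS, hUcard⟩ := Finset.exists_subset_card_eq hbig
    obtain ⟨W, hWT, hWcard⟩ := Finset.exists_subset_card_eq hT
    have hdisj : Disjoint U W := by
      rw [Finset.disjoint_left]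
      intro a haU haW
      have := hWT haW
      rw [Finset.mem_sdiff] at this
      exact this.2 (Finset.mem_union_left _ (hUS haU))
    obtain ⟨u, hu, w, hw, hadj⟩ := hP6 U W hdisj hUcard hWcard
    have hwT := hWT hw
    rw [Finset.mem_sdiff] at hwT
    apply hwT.2
    apply Finset.mem_union_right
    rw [hNdef]
    unfold extNbhd
    simp only [Finset.mem_filter]
    refine ⟨Finset.mem_univ _, fun hwS => hwT.2 (Finset.mem_union_left _ hwS), u, hUS hu, hadj⟩
  · -- Case 2 : S is small
    push_neg at hbig
    have hSreal : (S.card : ℝ) ≤ (n : ℝ) / Real.sqrt L := by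
      have h1 : (S.card : ℝ) + 1 ≤ m := by exact_mod_cast hbig
      have h2 : (m:ℝ) < (n : ℝ) / Real.sqrt L + 1 := by
        have : (0:ℝ) ≤ (n : ℝ) / Real.sqrt L := by positivity
        exact Nat.ceil_lt_add_one this
      linarith
    -- walk gadgets
    have hE : ∀ u v : Fin n, u ∈ SMALL → v ∈ SMALL → ¬ Γ₀.Adj u v := by
      intro u v hu hv hadj
      exact hpath u v hu hv (SimpleGraph.Walk.cons (hle hadj) SimpleGraph.Walk.nil)
        (by simp [SimpleGraph.Walk.cons_isPath_iff, (hle hadj).ne]) (by simp) (by simp)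
    have hTwo : ∀ u v w : Fin n, u ∈ SMALL → v ∈ SMALL → u ≠ v →
        Γ₀.Adj u w → Γ₀.Adj v w → False := by
      intro u v w hu hv huv h1 h2
      have e1 : u ≠ w := (hle h1).ne
      have e2 : w ≠ v := (hle h2).ne'
      refine hpath u v hu hv
        (SimpleGraph.Walk.cons (hle h1) (SimpleGraph.Walk.cons (hle h2).symm
          SimpleGraph.Walk.nil)) ?_ (by simp) (by simp)
      simp [SimpleGraph.Walk.cons_isPath_iff, e1, e2, huv]
    have hThree : ∀ v v' y x : Fin n, v ∈ SMALL → v' ∈ SMALL → v ≠ v' →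
        Γ₀.Adj v y → Γ₀.Adj y x → Γ₀.Adj x v' → False := by
      intro v v' y x hv hv' hvv' h1 h2 h3
      have hy : y ∉ SMALL := fun hy => hE v y hv hy h1
      have hx : x ∉ SMALL := fun hx => hE x v' hx hv' h3
      have e1 : v ≠ y := (hle h1).ne
      have e2 : y ≠ x := (hle h2).ne
      have e3 : x ≠ v' := (hle h3).ne
      have e4 : y ≠ v' := fun h => hy (h ▸ hv')
      have e5 : v ≠ x := fun h => hx (h ▸ hv)
      refine hpath v v' hv hv'
        (SimpleGraph.Walk.cons (hle h1) (SimpleGraph.Walk.cons (hle h2)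
          (SimpleGraph.Walk.cons (hle h3) SimpleGraph.Walk.nil))) ?_ (by simp) (by simp)
      simp [SimpleGraph.Walk.cons_isPath_iff, e1, e2, e3, e4, e5, hvv']
    have hFour : ∀ v v' y x z : Fin n, v ∈ SMALL → v' ∈ SMALL → v ≠ v' → x ∉ SMALL →
        y ≠ z → Γ₀.Adj v y → Γ₀.Adj y x → Γ₀.Adj x z → Γ₀.Adj z v' → False := by
      intro v v' y x z hv hv' hvv' hx hyz h1 h2 h3 h4
      have hy : y ∉ SMALL := fun hy => hE v y hv hy h1
      have hz : z ∉ SMALL := fun hz => hE z v' hz hv' h4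
      have e1 : v ≠ y := (hle h1).ne
      have e2 : y ≠ x := (hle h2).ne
      have e3 : x ≠ z := (hle h3).ne
      have e4 : z ≠ v' := (hle h4).ne
      have e5 : v ≠ x := fun h => hx (h ▸ hv)
      have e6 : v ≠ z := fun h => hz (h ▸ hv)
      have e7 : y ≠ v' := fun h => hy (h ▸ hv')
      have e8 : x ≠ v' := fun h => hx (h ▸ hv')
      refine hpath v v' hv hv'
        (SimpleGraph.Walk.cons (hle h1) (SimpleGraph.Walk.cons (hle h2)
          (SimpleGraph.Walk.cons (hle h3) (SimpleGraph.Walk.cons (hle h4)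
            SimpleGraph.Walk.nil)))) ?_ (by simp) (by simp)
      simp [SimpleGraph.Walk.cons_isPath_iff, e1, e2, e3, e4, e5, e6, e7, e8, hvv', hyz]
    have hCyc3 : ∀ v y x : Fin n, v ∈ SMALL → Γ₀.Adj v y → Γ₀.Adj y x → Γ₀.Adj x v →
        False := by
      intro v y x hv h1 h2 h3
      have e1 : v ≠ y := (hle h1).ne
      have e2 : y ≠ x := (hle h2).ne
      have e3 : x ≠ v := (hle h3).ne
      refine hcyc v hv
        (SimpleGraph.Walk.cons (hle h1) (SimpleGraph.Walk.cons (hle h2)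
          (SimpleGraph.Walk.cons (hle h3) SimpleGraph.Walk.nil))) ?_ (by simp)
      rw [SimpleGraph.Walk.cons_isCycle_iff]
      constructor
      · simp [SimpleGraph.Walk.cons_isPath_iff, e2, e3, e1.symm]
      · simp [Sym2.eq, Sym2.rel_iff', e1, e2, e3, e3.symm, e1.symm]
    have hCyc4 : ∀ v y x z : Fin n, v ∈ SMALL → x ∉ SMALL → y ≠ z →
        Γ₀.Adj v y → Γ₀.Adj y x → Γ₀.Adj x z → Γ₀.Adj z v → False := by
      intro v y x z hv hx hyz h1 h2 h3 h4
      have e1 : v ≠ y := (hle h1).ne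
      have e2 : y ≠ x := (hle h2).ne
      have e3 : x ≠ z := (hle h3).ne
      have e4 : z ≠ v := (hle h4).ne
      have e5 : v ≠ x := fun h => hx (h ▸ hv)
      refine hcyc v hv
        (SimpleGraph.Walk.cons (hle h1) (SimpleGraph.Walk.cons (hle h2)
          (SimpleGraph.Walk.cons (hle h3) (SimpleGraph.Walk.cons (hle h4)
            SimpleGraph.Walk.nil)))) ?_ (by simp)
      rw [SimpleGraph.Walk.cons_isCycle_iff]
      constructor
      · simp [SimpleGraph.Walk.cons_isPath_iff, e2, e3, e4, hyz, e1.symm, e5.symm]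
      · simp [Sym2.eq, Sym2.rel_iff', e1, e2, e3, e4, e5, e1.symm, e4.symm, e5.symm, hyz]
    -- sets
    set S1 : Finset (Fin n) := S ∩ SMALL with hS1def
    set S2 : Finset (Fin n) := S \ SMALL with hS2def
    have hS12card : S1.card + S2.card = S.card := Finset.card_inter_add_card_sdiff S SMALL
    have hS1sub : S1 ⊆ SMALL := Finset.inter_subset_right
    have hS2S : S2 ⊆ S := Finset.sdiff_subset
    have hS1S : S1 ⊆ S := Finset.inter_subset_left
    have hS2notSMALL : ∀ x ∈ S2, x ∉ SMALL := fun x hx => (Finset.mem_sdiff.1 hx).2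
    set K : Finset (Fin n) := S1.biUnion (fun v => Γ₀.neighborFinset v) with hKdef
    have hKmem : ∀ a : Fin n, a ∈ K ↔ ∃ v ∈ S1, Γ₀.Adj v a := by
      intro a
      rw [hKdef]
      simp [Finset.mem_biUnion, SimpleGraph.mem_neighborFinset]
    have hKnotSMALL : ∀ a ∈ K, a ∉ SMALL := by
      intro a ha haS
      obtain ⟨v, hv, hadj⟩ := (hKmem a).1 ha
      exact hE v a (hS1sub hv) haS hadj
    have hKcard : 2 * S1.card ≤ K.card := by
      rw [hKdef, Finset.card_biUnion]
      · calc 2 * S1.card = ∑ _v ∈ S1, 2 := by rw [Finset.sum_const, smul_eq_mul, mul_comm]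
          _ ≤ ∑ v ∈ S1, (Γ₀.neighborFinset v).card := by
              refine Finset.sum_le_sum fun v _ => ?_
              rw [SimpleGraph.card_neighborFinset_eq_degree]
              exact hdeg2 v
      · intro v₁ h₁ v₂ h₂ hne
        rw [Function.onFun, Finset.disjoint_left]
        intro w hw1 hw2
        rw [SimpleGraph.mem_neighborFinset] at hw1 hw2
        exact hTwo v₁ v₂ w (hS1sub h₁) (hS1sub h₂) hne hw1.symm.symm hw2
    set W₀ : Finset (Fin n) := extNbhd Γ₀ S2 \ (S ∪ K) with hW₀def
    -- each vertex of S2 has at most one neighbor in S1 ∪ K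
    have hstar : ∀ x ∈ S2, ((S1 ∪ K) ∩ Γ₀.neighborFinset x).card ≤ 1 := by
      intro x hx
      have hxS : x ∉ SMALL := hS2notSMALL x hx
      rw [Finset.card_le_one]
      intro a ha b hb
      by_contra hab
      have ha' := Finset.mem_inter.1 ha
      have hb' := Finset.mem_inter.1 hb
      have hxa : Γ₀.Adj x a := (SimpleGraph.mem_neighborFinset _ _ _).1 ha'.2
      have hxb : Γ₀.Adj x b := (SimpleGraph.mem_neighborFinset _ _ _).1 hb'.2
      -- helper for the mixed case
      have mixed : ∀ a' b' : Fin n, a' ∈ S1 → b' ∈ K → Γ₀.Adj x a' → Γ₀.Adj x b' →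
          a' ≠ b' → False := by
        intro a' b' haS1 hbK hxa' hxb' hab'
        obtain ⟨v, hvS1, hvb⟩ := (hKmem b').1 hbK
        by_cases hva : v = a'
        · subst hva
          exact hCyc3 v x b' (hS1sub hvS1) hxa'.symm hxb' hvb.symm
        · exact hThree a' v x b' (hS1sub haS1) (hS1sub hvS1) (Ne.symm hva)
            hxa'.symm hxb' hvb.symm
      rcases Finset.mem_union.1 ha'.1 with haS1 | haK <;>
        rcases Finset.mem_union.1 hb'.1 with hbS1 | hbK
      · exact hTwo a b x (hS1sub haS1) (hS1sub hbS1) hab hxa.symm hxb.symm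
      · exact mixed a b haS1 hbK hxa hxb hab
      · exact mixed b a hbS1 haK hxb hxa (Ne.symm hab)
      · obtain ⟨v₁, hv₁, hv₁a⟩ := (hKmem a).1 haK
        obtain ⟨v₂, hv₂, hv₂b⟩ := (hKmem b).1 hbK
        by_cases hv : v₁ = v₂
        · subst hv
          exact hCyc4 v₁ a x b (hS1sub hv₁) hxS hab hv₁a hxa.symm hxb hv₂b.symm
        · exact hFour v₁ v₂ a x b (hS1sub hv₁) (hS1sub hv₂) hv hxS hab
            hv₁a hxa.symm hxb hv₂b.symm
    -- coverage of neighborhoods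
    have hcover : ∀ x ∈ S2, Γ₀.neighborFinset x ⊆ S2 ∪ (S1 ∪ K) ∪ W₀ := by
      intro x hx y hy
      rw [SimpleGraph.mem_neighborFinset] at hy
      by_cases hyS : y ∈ S
      · by_cases hySM : y ∈ SMALL
        · exact Finset.mem_union_left _ (Finset.mem_union_right _
            (Finset.mem_union_left _ (Finset.mem_inter.2 ⟨hyS, hySM⟩)))
        · exact Finset.mem_union_left _ (Finset.mem_union_left _
            (Finset.mem_sdiff.2 ⟨hyS, hySM⟩))
      · by_cases hyK : y ∈ K
        · exact Finset.mem_union_left _ (Finset.mem_union_right _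
            (Finset.mem_union_right _ hyK))
        · refine Finset.mem_union_right _ ?_
          rw [hW₀def, Finset.mem_sdiff]
          constructor
          · unfold extNbhd
            simp only [Finset.mem_filter]
            exact ⟨Finset.mem_univ _, fun h => hyS (hS2S h), x, hx, hy⟩
          · rw [Finset.mem_union]
            push_neg
            exact ⟨hyS, hyK⟩
    -- per-vertex degree bound
    have hperv : ∀ x ∈ S2,
        d₀ ≤ (S2 ∩ Γ₀.neighborFinset x).card + 1 + (W₀ ∩ Γ₀.neighborFinset x).card := by
      intro x hx
      have hdx : d₀ ≤ Γ₀.degree x := hP5 x (hS2notSMALL x hx)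
      have h1 : Γ₀.degree x = (Γ₀.neighborFinset x).card :=
        (SimpleGraph.card_neighborFinset_eq_degree _ _).symm
      have h2 : Γ₀.neighborFinset x =
          (S2 ∩ Γ₀.neighborFinset x) ∪ ((S1 ∪ K) ∩ Γ₀.neighborFinset x)
            ∪ (W₀ ∩ Γ₀.neighborFinset x) := by
        rw [← Finset.union_inter_distrib_right, ← Finset.union_inter_distrib_right]
        exact (Finset.inter_eq_right.2 (hcover x hx)).symm
      have h3 : (Γ₀.neighborFinset x).card
          ≤ (S2 ∩ Γ₀.neighborFinset x).card + ((S1 ∪ K) ∩ Γ₀.neighborFinset x).card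
            + (W₀ ∩ Γ₀.neighborFinset x).card := by
        have h5 := Finset.card_union_le ((S2 ∩ Γ₀.neighborFinset x)
          ∪ ((S1 ∪ K) ∩ Γ₀.neighborFinset x)) (W₀ ∩ Γ₀.neighborFinset x)
        have h6 := Finset.card_union_le (S2 ∩ Γ₀.neighborFinset x)
          ((S1 ∪ K) ∩ Γ₀.neighborFinset x)
        have h7 : (Γ₀.neighborFinset x).card
            = ((S2 ∩ Γ₀.neighborFinset x ∪ (S1 ∪ K) ∩ Γ₀.neighborFinset x)
              ∪ W₀ ∩ Γ₀.neighborFinset x).card := by rw [← h2]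
        omega
      have h4 := hstar x hx
      omega
    -- summed bound
    have hsum : d₀ * S2.card
        ≤ 2 * edgesWithin Γ₀ S2 + S2.card + edgesBetween Γ₀ S2 W₀ := by
      have h1 : d₀ * S2.card ≤ ∑ x ∈ S2,
          ((S2 ∩ Γ₀.neighborFinset x).card + 1 + (W₀ ∩ Γ₀.neighborFinset x).card) := by
        calc d₀ * S2.card = ∑ _x ∈ S2, d₀ := by rw [Finset.sum_const, smul_eq_mul, mul_comm]
          _ ≤ _ := Finset.sum_le_sum hperv
      rw [Finset.sum_add_distrib, Finset.sum_add_distrib, Finset.sum_const, smul_eq_mul,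
        mul_one, ← edgesBetween_eq_sum, ← edgesBetween_eq_sum] at h1
      have h2 := edgesBetween_self_le Γ₀ S2
      omega
    -- W₀ is large
    have hW₀card : 3 * S2.card ≤ W₀.card := by
      by_contra hW'
      push_neg at hW'
      have hS2pos : 1 ≤ S2.card := by omega
      have hS2real : (S2.card : ℝ) ≤ (n : ℝ) / Real.sqrt L := by
        have := Finset.card_le_card hS2S
        have : (S2.card : ℝ) ≤ S.card := by exact_mod_cast this
        linarith
      have hdisj2 : Disjoint S2 W₀ := by
        rw [Finset.disjoint_left]
        intro a ha haW
        rw [hW₀def, Finset.mem_sdiff] at haW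
        exact haW.2 (Finset.mem_union_left _ (hS2S ha))
      have hWle : (W₀.card : ℝ) ≤ (S2.card : ℝ) * L ^ ((1:ℝ)/4) := by
        have h1 : (W₀.card : ℝ) ≤ 3 * S2.card := by exact_mod_cast hW'.le
        have h2 : (3:ℝ) * S2.card ≤ L ^ ((1:ℝ)/4) * S2.card := by
          apply mul_le_mul_of_nonneg_right _ (Nat.cast_nonneg _)
          linarith
        linarith [h2]
      have hP4' := hP4 S2 W₀ hdisj2 hS2real hWle
      have hP3' := hP3 S2 hS2real
      have hsumR : (d₀:ℝ) * S2.card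
          ≤ 2 * (edgesWithin Γ₀ S2 : ℝ) + S2.card + (edgesBetween Γ₀ S2 W₀ : ℝ) := by
        exact_mod_cast hsum
      have h1 : (1:ℝ) ≤ S2.card := by exact_mod_cast hS2pos
      have hs2pos : (0:ℝ) < S2.card := by linarith
      have key : (d₀:ℝ) * S2.card ≤ (4 * L ^ ((3:ℝ)/4) + 2) * S2.card := by
        have hP3'' : (edgesWithin Γ₀ S2 : ℝ) ≤ (S2.card : ℝ) * L ^ ((3:ℝ)/4) := hP3'
        nlinarith [hP4', hsumR, hP3'']
      have : (d₀:ℝ) ≤ 4 * L ^ ((3:ℝ)/4) + 2 := le_of_mul_le_mul_right key hs2pos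
      linarith
    -- final assembly
    have hKSsub : (K \ S) ∪ W₀ ⊆ N := by
      intro a ha
      rw [hNdef]
      unfold extNbhd
      simp only [Finset.mem_filter]
      refine ⟨Finset.mem_univ _, ?_⟩
      rcases Finset.mem_union.1 ha with h | h
      · rw [Finset.mem_sdiff] at h
        obtain ⟨v, hv, hadj⟩ := (hKmem a).1 h.1
        exact ⟨h.2, v, hS1S hv, hadj⟩
      · rw [hW₀def, Finset.mem_sdiff] at h
        have h2 := h.1
        unfold extNbhd at h2
        simp only [Finset.mem_filter] at h2
        obtain ⟨-, -, u, hu, hadj⟩ := h2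
        refine ⟨fun hs => h.2 (Finset.mem_union_left _ hs), u, hS2S hu, hadj⟩
    have hdisjKW : Disjoint (K \ S) W₀ := by
      rw [Finset.disjoint_left]
      intro a ha haW
      rw [hW₀def, Finset.mem_sdiff] at haW
      exact haW.2 (Finset.mem_union_right _ (Finset.mem_sdiff.1 ha).1)
    have hfin : (K \ S).card + W₀.card ≤ N.card := by
      rw [← Finset.card_union_of_disjoint hdisjKW]
      exact Finset.card_le_card hKSsub
    have hKsplit : (K ∩ S).card + (K \ S).card = K.card := Finset.card_inter_add_card_sdiff K S
    have hKS2 : (K ∩ S).card ≤ S2.card := by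
      apply Finset.card_le_card
      intro a ha
      rw [Finset.mem_inter] at ha
      rw [hS2def, Finset.mem_sdiff]
      exact ⟨ha.2, hKnotSMALL a ha.1⟩
    omega
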